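/- Let X = (X_n)_{n≥0} be an S-valued process with X_0 = x0, and let i, j ∈ S. If almost surely ∑_{n=1}^∞ [ P(X_{τ_n(i)+1} = j | 𝓕_{τ_n(i)}) · 1_{{τ_n(i) < ∞}} + 1_{{τ_n(i) = ∞}} ] = ∞, then P( (X_n = i for only finitely many n) ∪ (X_n = j for infinitely many n) ) = 1. -/

import Mathlib

/-!
STATEMENT 11 (Theorem `rec2`): if the series
`∑_n [P(X_{τ_n(i)+1} = j | 𝓕_{τ_n(i)}) 1_{τ_n(i)<∞} + 1_{τ_n(i)=∞}]` diverges
almost surely, then almost surely either `i` is visited only finitely often or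
`j` is visited infinitely often.
-/

open MeasureTheory Filter
open scoped Classical

/-- The natural filtration of the process `X`: `natFiltration X n` is the
σ-algebra generated by `X_0, …, X_n`. -/
def natFiltration {Ω S : Type*} [MeasurableSpace S] (X : ℕ → Ω → S) (n : ℕ) :
    MeasurableSpace Ω :=
  ⨆ k ≤ n, MeasurableSpace.comap (X k) inferInstance

/-- The time of the `(n+1)`-st visit of the process `X` to the state `i`
(`⊤` if `i` is visited at most `n` times). -/
noncomputable def visitTime {Ω S : Type*} (X : ℕ → Ω → S) (i : S) (n : ℕ) (ω : Ω) : ℕ∞ :=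
  if {t : ℕ | X t ω = i}.Infinite ∨ n < {t : ℕ | X t ω = i}.ncard then
    ((Nat.nth (fun t => X t ω = i) n : ℕ) : ℕ∞)
  else ⊤

/-- The state visited just after the `(n+1)`-st visit to `i`; `none` (that is, the
coffin state `∂`) if `i` is visited at most `n` times. -/
noncomputable def succAtVisit {Ω S : Type*} (X : ℕ → Ω → S) (i : S) (n : ℕ) (ω : Ω) :
    Option S :=
  if visitTime X i n ω = ⊤ then none
  else some (X ((visitTime X i n ω).toNat + 1) ω)

/-- The σ-algebra `𝓕_τ` associated with the (possibly infinite) stopping time `τ`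
for the filtration `ℱ`. -/
def stoppedSA {Ω : Type*} (ℱ : ℕ → MeasurableSpace Ω) (τ : Ω → ℕ∞) :
    MeasurableSpace Ω :=
  MeasurableSpace.generateFrom
    {B | ∀ k : ℕ, MeasurableSet[ℱ k] (B ∩ {ω | τ ω ≤ (k : ℕ∞)})}

section Aux

variable {Ω S : Type*} [MeasurableSpace S] [MeasurableSingletonClass S]
  {X : ℕ → Ω → S} {i : S}

/-- `valid` condition rephrased. -/
lemma visit_valid_iff (ω : Ω) (n : ℕ) :
    ({t : ℕ | X t ω = i}.Infinite ∨ n < {t : ℕ | X t ω = i}.ncard) ↔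
      ∀ hf : (setOf fun t => X t ω = i).Finite, n < hf.toFinset.card := by
  constructor
  · rintro (h | h) hf
    · exact absurd hf h
    · exact lt_of_lt_of_eq h (Set.ncard_eq_toFinset_card _ hf)
  · intro h
    by_cases hfin : (setOf fun t => X t ω = i).Finite
    · right
      have := h hfin
      exact lt_of_lt_of_eq this (Set.ncard_eq_toFinset_card _ hfin).symm
    · exact Or.inl hfin

lemma visitTime_le_iff {ω : Ω} {n k : ℕ} :
    visitTime X i n ω ≤ (k : ℕ∞) ↔ n < Nat.count (fun t => X t ω = i) (k + 1) := by
  classical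
  set p : ℕ → Prop := fun t => X t ω = i with hp
  have hpc : Nat.count (fun t => X t ω = i) (k + 1) = Nat.count p (k + 1) := rfl
  rw [visitTime, hpc]
  split_ifs with h
  · have hvalid : ∀ hf : (setOf p).Finite, n < hf.toFinset.card := (visit_valid_iff ω n).1 h
    constructor
    · intro hle
      have hnth : Nat.nth p n ≤ k := by exact_mod_cast hle
      have h1 : Nat.count p (Nat.nth p n) = n := Nat.count_nth hvalid
      have h2 : p (Nat.nth p n) := Nat.nth_mem n hvalid
      have h3 : Nat.count p (Nat.nth p n + 1) = n + 1 := by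
        rw [Nat.count_succ, h1, if_pos h2]
      have h4 : Nat.count p (Nat.nth p n + 1) ≤ Nat.count p (k + 1) :=
        Nat.count_monotone p (by omega)
      omega
    · intro hcount
      have := Nat.nth_lt_of_lt_count hcount
      exact_mod_cast Nat.lt_succ_iff.mp this
  · simp only [top_le_iff, ENat.coe_ne_top] -- ⊤ ≤ k is false
    constructor
    · intro hc; exact absurd hc (by simp)
    · intro hcount
      exfalso
      apply h
      apply (visit_valid_iff ω n).2
      intro hf
      have := Nat.count_le_card hf (k + 1)
      exact lt_of_lt_of_le hcount this

lemma measurable_natFiltration_X {k t : ℕ} (ht : t ≤ k) :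
    Measurable[natFiltration X k] (X t) := by
  have hle : MeasurableSpace.comap (X t) inferInstance ≤ natFiltration X k := by
    refine le_iSup₂ (f := fun t (_ : t ≤ k) => MeasurableSpace.comap (X t) inferInstance) t ht
  exact fun s hs => hle _ (MeasurableSpace.measurableSet_comap.2 ⟨s, hs, rfl⟩)

lemma measurableSet_visitTime_le (n k : ℕ) :
    MeasurableSet[natFiltration X k] {ω | visitTime X i n ω ≤ (k : ℕ∞)} := by
  classical
  have hset : {ω | visitTime X i n ω ≤ (k : ℕ∞)} =
      {ω | n < Nat.count (fun t => X t ω = i) (k + 1)} := by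
    ext ω; exact visitTime_le_iff
  rw [hset]
  have hc : Measurable[natFiltration X k]
      (fun ω => Nat.count (fun t => X t ω = i) (k + 1)) := by
    have : (fun ω => Nat.count (fun t => X t ω = i) (k + 1)) =
        fun ω => ∑ t ∈ Finset.range (k + 1), if X t ω = i then 1 else 0 := by
      funext ω
      rw [Nat.count_eq_card_filter_range, Finset.card_filter]
    rw [this]
    refine Finset.measurable_sum _ fun t htr => ?_
    have ht : t ≤ k := by simpa [Nat.lt_succ_iff] using Finset.mem_range.mp htr
    have hXt : Measurable[natFiltration X k] (X t) := measurable_natFiltration_X ht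
    exact Measurable.ite (hXt (measurableSet_singleton i)) measurable_const measurable_const
  exact hc (by trivial : MeasurableSet {m : ℕ | n < m})

lemma natFiltration_mono {k l : ℕ} (h : k ≤ l) : natFiltration X k ≤ natFiltration X l := by
  refine iSup₂_le fun t ht => ?_
  exact le_iSup₂ (f := fun t (_ : t ≤ l) => MeasurableSpace.comap (X t) inferInstance) t (ht.trans h)

lemma natFiltration_le {m : MeasurableSpace Ω} (hX : ∀ n, Measurable (X n)) (k : ℕ) :
    natFiltration X k ≤ m :=
  iSup₂_le fun t _ => (hX t).comap_le

lemma measurableSet_stoppedSA_iff {ℱ : ℕ → MeasurableSpace Ω} {τ : Ω → ℕ∞}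
    (hτ : ∀ k : ℕ, MeasurableSet[ℱ k] {ω | τ ω ≤ (k : ℕ∞)}) {B : Set Ω} :
    MeasurableSet[stoppedSA ℱ τ] B ↔
      ∀ k : ℕ, MeasurableSet[ℱ k] (B ∩ {ω | τ ω ≤ (k : ℕ∞)}) := by
  constructor
  · intro hB
    induction hB with
    | basic u hu => exact hu
    | empty => intro k; simpa using @MeasurableSet.empty _ (ℱ k)
    | compl u hu ih =>
      intro k
      have : uᶜ ∩ {ω | τ ω ≤ (k : ℕ∞)} =
          {ω | τ ω ≤ (k : ℕ∞)} \ (u ∩ {ω | τ ω ≤ (k : ℕ∞)}) := by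
        ext ω
        simp only [Set.mem_inter_iff, Set.mem_compl_iff, Set.mem_diff, Set.mem_setOf_eq]
        tauto
      rw [this]
      exact (hτ k).diff (ih k)
    | iUnion f hf ih =>
      intro k
      rw [Set.iUnion_inter]
      exact MeasurableSet.iUnion fun t => ih t k
  · exact fun h => MeasurableSpace.measurableSet_generateFrom h

end Aux

section Aux2

variable {Ω S : Type*} [MeasurableSpace S] [MeasurableSingletonClass S] {X : ℕ → Ω → S} {i : S}

lemma visitTime_le_mono {m n : ℕ} (h : m ≤ n) {ω : Ω} {k : ℕ}
    (hk : visitTime X i n ω ≤ (k : ℕ∞)) : visitTime X i m ω ≤ (k : ℕ∞) := by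
  rw [visitTime_le_iff] at hk ⊢; omega

lemma stoppedSA_visit_mono {m n : ℕ} (h : m ≤ n) :
    stoppedSA (natFiltration X) (visitTime X i m) ≤
      stoppedSA (natFiltration X) (visitTime X i n) := by
  intro B hB
  rw [measurableSet_stoppedSA_iff (fun k => measurableSet_visitTime_le m k)] at hB
  refine MeasurableSpace.measurableSet_generateFrom fun k => ?_
  have hident : B ∩ {ω | visitTime X i n ω ≤ (k : ℕ∞)} =
      (B ∩ {ω | visitTime X i m ω ≤ (k : ℕ∞)}) ∩ {ω | visitTime X i n ω ≤ (k : ℕ∞)} := by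
    ext ω
    simp only [Set.mem_inter_iff, Set.mem_setOf_eq]
    exact ⟨fun ⟨h1, h2⟩ => ⟨⟨h1, visitTime_le_mono h h2⟩, h2⟩, fun ⟨⟨h1, _⟩, h2⟩ => ⟨h1, h2⟩⟩
  rw [hident]
  exact (hB k).inter (measurableSet_visitTime_le n k)

lemma measurableSet_visitTime_top (n : ℕ) :
    MeasurableSet[stoppedSA (natFiltration X) (visitTime X i n)]
      {ω | visitTime X i n ω = ⊤} := by
  refine MeasurableSpace.measurableSet_generateFrom fun k => ?_
  have : {ω | visitTime X i n ω = ⊤} ∩ {ω | visitTime X i n ω ≤ (k : ℕ∞)} = ∅ := by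
    ext ω
    simp only [Set.mem_inter_iff, Set.mem_setOf_eq, Set.mem_empty_iff_false, iff_false, not_and]
    intro htop hle
    rw [htop] at hle
    exact (by simp : ¬ (⊤ : ℕ∞) ≤ (k : ℕ∞)) hle
  rw [this]
  exact @MeasurableSet.empty _ (natFiltration X k)

lemma measurableSet_visitTime_ne_top (n : ℕ) :
    MeasurableSet[stoppedSA (natFiltration X) (visitTime X i n)]
      {ω | visitTime X i n ω ≠ ⊤} := by
  have : {ω | visitTime X i n ω ≠ ⊤} = {ω | visitTime X i n ω = ⊤}ᶜ := rfl
  rw [this]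
  exact (measurableSet_visitTime_top n).compl

lemma measurableSet_visitTime_eq {n t k : ℕ} (ht : t ≤ k) :
    MeasurableSet[natFiltration X k] {ω | visitTime X i n ω = (t : ℕ∞)} := by
  have hident : {ω | visitTime X i n ω = (t : ℕ∞)} =
      {ω | visitTime X i n ω ≤ (t : ℕ∞)} \
        ⋃ s ∈ Finset.range t, {ω | visitTime X i n ω ≤ (s : ℕ∞)} := by
    ext ω
    simp only [Set.mem_diff, Set.mem_setOf_eq, Set.mem_iUnion, Finset.mem_range, not_exists]
    constructor
    · intro h
      rw [h]
      refine ⟨le_refl _, fun s hs hle => ?_⟩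
      exact absurd (by exact_mod_cast hle) (by omega)
    · rintro ⟨hle, hnot⟩
      have hne : visitTime X i n ω ≠ ⊤ := fun htop => by simp [htop] at hle
      obtain ⟨u, hu⟩ : ∃ u : ℕ, visitTime X i n ω = (u : ℕ∞) :=
        ⟨(visitTime X i n ω).toNat, (ENat.coe_toNat hne).symm⟩
      rw [hu] at hle hnot ⊢
      have hut : u ≤ t := by exact_mod_cast hle
      rcases lt_or_eq_of_le hut with hlt | heq
      · exact absurd (le_refl _) (by exact_mod_cast hnot u hlt)
      · rw [heq]
  rw [hident]
  refine MeasurableSet.diff ?_ ?_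
  · exact (natFiltration_mono ht) _ (measurableSet_visitTime_le n t)
  · refine MeasurableSet.biUnion (Finset.range t).countable_toSet fun s hs => ?_
    have hsk : s ≤ k := le_trans (le_of_lt (Finset.mem_range.mp hs)) ht
    exact (natFiltration_mono hsk) _ (measurableSet_visitTime_le n s)

lemma succAtVisit_eq_some_iff {j : S} {n : ℕ} {ω : Ω} :
    succAtVisit X i n ω = some j ↔
      visitTime X i n ω ≠ ⊤ ∧ X ((visitTime X i n ω).toNat + 1) ω = j := by
  rw [succAtVisit]
  split_ifs with h
  · simp [h]
  · simp [h]

lemma measurableSet_succAtVisit (j : S) (n : ℕ) :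
    MeasurableSet[stoppedSA (natFiltration X) (visitTime X i (n + 1))]
      {ω | succAtVisit X i n ω = some j} := by
  classical
  refine MeasurableSpace.measurableSet_generateFrom fun k => ?_
  have hident : {ω | succAtVisit X i n ω = some j} ∩
      {ω | visitTime X i (n + 1) ω ≤ (k : ℕ∞)} =
      ⋃ t ∈ Finset.range k, ({ω | visitTime X i n ω = (t : ℕ∞)} ∩ {ω | X (t + 1) ω = j}
        ∩ {ω | visitTime X i (n + 1) ω ≤ (k : ℕ∞)}) := by
    ext ω
    simp only [Set.mem_inter_iff, Set.mem_setOf_eq, Set.mem_iUnion, Finset.mem_range]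
    constructor
    · rintro ⟨hsucc, hk⟩
      obtain ⟨hne, hXj⟩ := succAtVisit_eq_some_iff.mp hsucc
      set p : ℕ → Prop := fun t => X t ω = i with hp
      have hcount : n + 1 < Nat.count p (k + 1) := visitTime_le_iff.mp hk
      have hvalid1 : ∀ hf : (setOf p).Finite, n + 1 < hf.toFinset.card := fun hf =>
        lt_of_lt_of_le hcount (Nat.count_le_card hf (k + 1))
      have hvalid0 : ({t : ℕ | X t ω = i}.Infinite ∨ n < {t : ℕ | X t ω = i}.ncard) :=
        (visit_valid_iff ω n).2 fun hf => by have := hvalid1 hf; omega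
      have hτn : visitTime X i n ω = ((Nat.nth p n : ℕ) : ℕ∞) := by
        rw [visitTime, if_pos hvalid0]
      have hnth1 : Nat.nth p (n + 1) ≤ k := by
        have := Nat.nth_lt_of_lt_count hcount
        omega
      have hnn1 : Nat.nth p n < Nat.nth p (n + 1) :=
        Nat.nth_lt_nth' (Nat.lt_succ_self n) hvalid1
      refine ⟨Nat.nth p n, by omega, ⟨⟨hτn, ?_⟩, hk⟩⟩
      rwa [hτn, ENat.toNat_coe] at hXj
    · rintro ⟨t, htk, ⟨⟨hteq, hXj⟩, hk⟩⟩
      refine ⟨?_, hk⟩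
      rw [succAtVisit_eq_some_iff, hteq]
      exact ⟨by simp, by simpa using hXj⟩
  rw [hident]
  refine MeasurableSet.biUnion (Finset.range k).countable_toSet fun t ht => ?_
  have htk : t + 1 ≤ k := Finset.mem_range.mp ht
  refine MeasurableSet.inter (MeasurableSet.inter ?_ ?_) (measurableSet_visitTime_le (n + 1) k)
  · exact measurableSet_visitTime_eq (by omega)
  · exact (measurable_natFiltration_X htk) (measurableSet_singleton j)

lemma visitTime_eq_top_iff {n : ℕ} {ω : Ω} :
    visitTime X i n ω = ⊤ ↔
      ({t : ℕ | X t ω = i}.Finite ∧ {t : ℕ | X t ω = i}.ncard ≤ n) := by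
  rw [visitTime]
  split_ifs with h
  · simp only [ENat.coe_ne_top, false_iff]
    rintro ⟨hfin, hcard⟩
    rcases h with h | h
    · exact h hfin
    · omega
  · push_neg at h
    simp only [true_iff, eq_self_iff_true]
    exact ⟨h.1, by omega⟩

end Aux2

theorem finite_visits_or_infinite_visits_of_ae_tendsto_atTop
    {S : Type*} [Countable S] [MeasurableSpace S] [MeasurableSingletonClass S]
    {Ω : Type*} [MeasurableSpace Ω] (P : Measure Ω) [IsProbabilityMeasure P]
    (x0 : S) (X : ℕ → Ω → S)
    (hX : ∀ n, Measurable (X n)) (hX0 : ∀ ω, X 0 ω = x0)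
    (i j : S)
    (h : ∀ᵐ ω ∂P, Tendsto
      (fun N => ∑ n ∈ Finset.range N,
        (if visitTime X i n ω = ⊤ then (1 : ℝ)
         else (P[Set.indicator {ω' | succAtVisit X i n ω' = some j}
            (fun _ => (1 : ℝ)) |
            stoppedSA (natFiltration X) (visitTime X i n)]) ω))
      atTop atTop) :
    P ({ω | {n : ℕ | X n ω = i}.Finite} ∪ {ω | {n : ℕ | X n ω = j}.Infinite}) = 1 := by
  classical
  suffices hae : ∀ᵐ ω ∂P, ω ∈
      (({ω | {n : ℕ | X n ω = i}.Finite} ∪ {ω | {n : ℕ | X n ω = j}.Infinite} : Set Ω)) by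
    have hcongr : (({ω | {n : ℕ | X n ω = i}.Finite} ∪ {ω | {n : ℕ | X n ω = j}.Infinite}
        : Set Ω)) =ᵐ[P] (Set.univ : Set Ω) := by
      rw [Filter.eventuallyEq_set]
      filter_upwards [hae] with ω hω
      simp [hω]
    rw [measure_congr hcongr, measure_univ]
  have hGmono : ∀ {a b : ℕ}, a ≤ b →
      stoppedSA (natFiltration X) (visitTime X i a) ≤
        stoppedSA (natFiltration X) (visitTime X i b) :=
    fun hab => stoppedSA_visit_mono hab
  -- membership helpers
  have hmemI : ∀ ω : Ω, (∃ n, visitTime X i n ω = ⊤) → ω ∈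
      (({ω | {n : ℕ | X n ω = i}.Finite} ∪ {ω | {n : ℕ | X n ω = j}.Infinite} : Set Ω)) := by
    rintro ω ⟨n, hn⟩
    exact Set.mem_union_left _ (visitTime_eq_top_iff.mp hn).1
  by_cases hGm : ∀ n, stoppedSA (natFiltration X) (visitTime X i n) ≤
      (inferInstance : MeasurableSpace Ω)
  · -- main case: all stopped σ-algebras are sub-σ-algebras
    set 𝒢 : Filtration ℕ (inferInstance : MeasurableSpace Ω) :=
      { seq := fun n => stoppedSA (natFiltration X) (visitTime X i n)
        mono' := fun a b hab => stoppedSA_visit_mono hab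
        le' := hGm } with h𝒢
    set s : ℕ → Set Ω := fun n => Nat.casesOn n ∅
      (fun k => {ω | succAtVisit X i k ω = some j} ∪ {ω | visitTime X i k ω = ⊤})
      with hs_def
    have hs : ∀ n, MeasurableSet[𝒢 n] (s n) := by
      intro n
      cases n with
      | zero => exact @MeasurableSet.empty _ (𝒢 0)
      | succ k =>
        refine MeasurableSet.union (measurableSet_succAtVisit j k) ?_
        exact stoppedSA_visit_mono (Nat.le_succ k) _ (measurableSet_visitTime_top k)
    have hBC := MeasureTheory.ae_mem_limsup_atTop_iff P hs
    have hB'm : ∀ n, MeasurableSet {ω | succAtVisit X i n ω = some j} :=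
      fun n => hGm (n + 1) _ (measurableSet_succAtVisit j n)
    have hTm : ∀ n, MeasurableSet {ω | visitTime X i n ω = ⊤} :=
      fun n => hGm n _ (measurableSet_visitTime_top n)
    have hintB : ∀ n, Integrable
        (Set.indicator {ω' | succAtVisit X i n ω' = some j} (fun _ => (1 : ℝ))) P :=
      fun n => (integrable_const (1 : ℝ)).indicator (hB'm n)
    have hintT : ∀ n, Integrable
        (Set.indicator {ω | visitTime X i n ω = ⊤} (fun _ => (1 : ℝ))) P :=
      fun n => (integrable_const (1 : ℝ)).indicator (hTm n)
    have hid : ∀ n, (fun ω => (P[(s (n + 1)).indicator (1 : Ω → ℝ)|𝒢 n]) ω) =ᵐ[P]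
        fun ω => (if visitTime X i n ω = ⊤ then (1 : ℝ)
          else (P[Set.indicator {ω' | succAtVisit X i n ω' = some j}
            (fun _ => (1 : ℝ)) |
            stoppedSA (natFiltration X) (visitTime X i n)]) ω) := by
      intro n
      have hdisj : Disjoint {ω | succAtVisit X i n ω = some j}
          {ω | visitTime X i n ω = ⊤} := by
        rw [Set.disjoint_left]
        intro ω hB hT
        exact (succAtVisit_eq_some_iff.mp hB).1 hT
      have hunion : (s (n + 1)).indicator (1 : Ω → ℝ) =
          Set.indicator {ω' | succAtVisit X i n ω' = some j} (fun _ => (1 : ℝ)) +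
            Set.indicator {ω | visitTime X i n ω = ⊤} (fun _ => (1 : ℝ)) :=
        Set.indicator_union_of_disjoint hdisj _
      have h1 : P[(s (n + 1)).indicator (1 : Ω → ℝ)|𝒢 n] =ᵐ[P]
          P[Set.indicator {ω' | succAtVisit X i n ω' = some j} (fun _ => (1 : ℝ)) |
              stoppedSA (natFiltration X) (visitTime X i n)] +
            P[Set.indicator {ω | visitTime X i n ω = ⊤} (fun _ => (1 : ℝ)) |
              stoppedSA (natFiltration X) (visitTime X i n)] := by
        rw [hunion]
        exact condExp_add (hintB n) (hintT n) (stoppedSA (natFiltration X) (visitTime X i n))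
      have h2 : P[Set.indicator {ω | visitTime X i n ω = ⊤} (fun _ => (1 : ℝ)) |
            stoppedSA (natFiltration X) (visitTime X i n)] =
          Set.indicator {ω | visitTime X i n ω = ⊤} (fun _ => (1 : ℝ)) :=
        condExp_of_stronglyMeasurable (hGm n)
          (stronglyMeasurable_const.indicator (measurableSet_visitTime_top n)) (hintT n)
      have h3 : P[Set.indicator {ω' | succAtVisit X i n ω' = some j} (fun _ => (1 : ℝ)) |
            stoppedSA (natFiltration X) (visitTime X i n)] =ᵐ[P]
          ({ω | visitTime X i n ω = ⊤}ᶜ).indicator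
            (P[Set.indicator {ω' | succAtVisit X i n ω' = some j} (fun _ => (1 : ℝ)) |
              stoppedSA (natFiltration X) (visitTime X i n)]) := by
        have hcompl : MeasurableSet[stoppedSA (natFiltration X) (visitTime X i n)]
            ({ω | visitTime X i n ω = ⊤}ᶜ) := (measurableSet_visitTime_top n).compl
        have hsub : ({ω | visitTime X i n ω = ⊤}ᶜ).indicator
            (Set.indicator {ω' | succAtVisit X i n ω' = some j} (fun _ => (1 : ℝ))) =
            Set.indicator {ω' | succAtVisit X i n ω' = some j} (fun _ => (1 : ℝ)) := by
          rw [Set.indicator_indicator]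
          have hseteq : ({ω | visitTime X i n ω = ⊤}ᶜ ∩
              {ω' | succAtVisit X i n ω' = some j}) =
              {ω' | succAtVisit X i n ω' = some j} := by
            ext ω
            simp only [Set.mem_inter_iff, Set.mem_compl_iff, Set.mem_setOf_eq]
            exact ⟨fun ⟨_, h2⟩ => h2, fun hh => ⟨(succAtVisit_eq_some_iff.mp hh).1, hh⟩⟩
          rw [hseteq]
        conv_lhs => rw [← hsub]
        exact condExp_indicator (hintB n) hcompl
      filter_upwards [h1, h3] with ω hω1 hω3
      by_cases htop : visitTime X i n ω = ⊤
      · rw [if_pos htop, hω1, Pi.add_apply, h2]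
        have hT1 : Set.indicator {ω | visitTime X i n ω = ⊤} (fun _ => (1 : ℝ)) ω = 1 :=
          Set.indicator_of_mem (show ω ∈ {ω | visitTime X i n ω = ⊤} from htop) _
        have hz : (P[Set.indicator {ω' | succAtVisit X i n ω' = some j} (fun _ => (1 : ℝ)) |
            stoppedSA (natFiltration X) (visitTime X i n)]) ω = 0 := by
          rw [hω3]
          refine Set.indicator_of_notMem ?_ _
          simp only [Set.mem_compl_iff, Set.mem_setOf_eq, not_not]
          exact htop
        rw [hz, hT1, zero_add]
      · rw [if_neg htop, hω1, Pi.add_apply, h2,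
          Set.indicator_of_notMem (show ω ∉ {ω | visitTime X i n ω = ⊤} from htop), add_zero]
    have hidall : ∀ᵐ ω ∂P, ∀ n, (P[(s (n + 1)).indicator (1 : Ω → ℝ)|𝒢 n]) ω =
        (if visitTime X i n ω = ⊤ then (1 : ℝ)
          else (P[Set.indicator {ω' | succAtVisit X i n ω' = some j}
            (fun _ => (1 : ℝ)) |
            stoppedSA (natFiltration X) (visitTime X i n)]) ω) :=
      ae_all_iff.2 fun n => hid n
    filter_upwards [h, hBC, hidall] with ω hω hlimsup hident
    have htend : Tendsto (fun N => ∑ k ∈ Finset.range N,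
        (P[(s (k + 1)).indicator (1 : Ω → ℝ)|𝒢 k]) ω) atTop atTop := by
      refine hω.congr fun N => ?_
      exact Finset.sum_congr rfl fun k _ => (hident k).symm
    have hmem : ω ∈ limsup s atTop := hlimsup.2 htend
    rw [mem_limsup_iff_frequently_mem] at hmem
    by_cases hexT : ∃ n, visitTime X i n ω = ⊤
    · exact hmemI ω hexT
    · push_neg at hexT
      have hfreq : ∃ᶠ n in atTop, succAtVisit X i n ω = some j := by
        rw [frequently_atTop] at hmem ⊢
        intro a
        obtain ⟨b, hb, hbmem⟩ := hmem (a + 1)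
        cases b with
        | zero => omega
        | succ k =>
          refine ⟨k, by omega, ?_⟩
          rcases hbmem with hmem1 | hmem2
          · exact hmem1
          · exact absurd hmem2 (hexT k)
      have hinfA : {n | succAtVisit X i n ω = some j}.Infinite :=
        Nat.frequently_atTop_iff_infinite.mp hfreq
      have hinfI : {t : ℕ | X t ω = i}.Infinite := by
        by_contra hfin
        rw [Set.not_infinite] at hfin
        exact hexT {t : ℕ | X t ω = i}.ncard
          (visitTime_eq_top_iff.mpr ⟨hfin, le_refl _⟩)
      refine Set.mem_union_right _ ?_
      have hmap : ∀ n ∈ {n | succAtVisit X i n ω = some j},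
          X (Nat.nth (fun t => X t ω = i) n + 1) ω = j := by
        intro n hn
        obtain ⟨hne, hXj⟩ := succAtVisit_eq_some_iff.mp hn
        have hτ : visitTime X i n ω = ((Nat.nth (fun t => X t ω = i) n : ℕ) : ℕ∞) := by
          rw [visitTime, if_pos (Or.inl hinfI)]
        rwa [hτ, ENat.toNat_coe] at hXj
      have himage : ((fun n => Nat.nth (fun t => X t ω = i) n + 1) ''
          {n | succAtVisit X i n ω = some j}) ⊆ {t : ℕ | X t ω = j} := by
        rintro t ⟨n, hn, rfl⟩
        exact hmap n hn
      refine Set.Infinite.mono himage ?_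
      refine Set.Infinite.image ?_ hinfA
      intro a _ b _ hab
      have hab' : Nat.nth (fun t => X t ω = i) a + 1 =
          Nat.nth (fun t => X t ω = i) b + 1 := hab
      exact Nat.nth_injective hinfI (by omega)
  · -- degenerate case: some stopped σ-algebra is not a sub-σ-algebra
    push_neg at hGm
    obtain ⟨N, hN⟩ := hGm
    filter_upwards [h] with ω hω
    refine hmemI ω ?_
    by_contra hno
    push_neg at hno
    have hsum0 : ∀ n, N ≤ n → (if visitTime X i n ω = ⊤ then (1 : ℝ)
        else (P[Set.indicator {ω' | succAtVisit X i n ω' = some j}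
          (fun _ => (1 : ℝ)) |
          stoppedSA (natFiltration X) (visitTime X i n)]) ω) = 0 := by
      intro n hn
      rw [if_neg (hno n)]
      have hnot : ¬ stoppedSA (natFiltration X) (visitTime X i n) ≤
          (inferInstance : MeasurableSpace Ω) := fun hle => hN ((hGmono hn).trans hle)
      rw [condExp_of_not_le hnot]
      rfl
    set g : ℕ → ℝ := fun n => (if visitTime X i n ω = ⊤ then (1 : ℝ)
        else (P[Set.indicator {ω' | succAtVisit X i n ω' = some j}
          (fun _ => (1 : ℝ)) |
          stoppedSA (natFiltration X) (visitTime X i n)]) ω) with hg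
    have hconst : ∀ M, N ≤ M →
        ∑ n ∈ Finset.range M, g n = ∑ n ∈ Finset.range N, g n := by
      intro M hM
      refine (Finset.sum_subset (Finset.range_subset_range.2 hM) fun x hx hnx => ?_).symm
      have hxN : N ≤ x := by
        simp only [Finset.mem_range] at hx hnx
        omega
      exact hsum0 x hxN
    obtain ⟨M, hMge, hMN⟩ :=
      ((hω.eventually (eventually_ge_atTop (∑ n ∈ Finset.range N, g n + 1))).and
        (eventually_ge_atTop N)).exists
    rw [hconst M hMN] at hMge
    clear hN
    linarith
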